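/- Let $f:\mathbb{R}\to(0,\infty)$ be a log-concave probability density with CDF $F$ and survival function $\overline F=1-F$. Then both $x\mapsto F(x)/f(x)$ and $x\mapsto -\overline F(x)/f(x)$ are nondecreasing on $\mathbb{R}$. -/

import Mathlib

open Set MeasureTheory

lemma concave_four {g : ℝ → ℝ} (hg : ConcaveOn ℝ univ g) {a b c d : ℝ}
    (hac : a ≤ c) (hcb : c ≤ b) (habcd : a + b = c + d) :
    g a + g b ≤ g c + g d := by
  rcases eq_or_lt_of_le (hac.trans hcb) with h | h
  · have hc : c = a := le_antisymm (h ▸ hcb) hac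
    have hd : d = a := by subst hc; linarith
    rw [hc, hd, ← h]
  · set l : ℝ := (b - c) / (b - a) with hl
    have hba : (0:ℝ) < b - a := by linarith
    have hl0 : 0 ≤ l := div_nonneg (by linarith) hba.le
    have hl1 : 0 ≤ 1 - l := by
      have : l ≤ 1 := (div_le_one hba).2 (by linarith)
      linarith
    have hsum : l + (1 - l) = 1 := by ring
    have hc' : l • a + (1 - l) • b = c := by
      rw [hl]; simp only [smul_eq_mul]
      rw [div_mul_eq_mul_div, one_sub_div hba.ne', div_mul_eq_mul_div, ← add_div,
        div_eq_iff hba.ne']; ring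
    have hd' : (1 - l) • a + l • b = d := by
      have : (1 - l) • a + l • b = a + b - (l • a + (1 - l) • b) := by
        simp [smul_eq_mul]; ring
      rw [this, hc']; linarith
    have h1 := hg.2 (mem_univ a) (mem_univ b) hl0 hl1 hsum
    have h2 := hg.2 (mem_univ a) (mem_univ b) hl1 hl0 (by ring)
    rw [hc'] at h1; rw [hd'] at h2
    have := add_le_add h1 h2
    calc g a + g b = (l • g a + (1 - l) • g b) + ((1 - l) • g a + l • g b) := by
          simp [smul_eq_mul]; ring
      _ ≤ g c + g d := this

lemma prod_le {f : ℝ → ℝ} (hfpos : ∀ x, 0 < f x)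
    (hflc : ConcaveOn ℝ univ (fun x => Real.log (f x))) {a b c d : ℝ}
    (hac : a ≤ c) (hcb : c ≤ b) (habcd : a + b = c + d) :
    f a * f b ≤ f c * f d := by
  have h := concave_four hflc hac hcb habcd
  have := Real.exp_le_exp.2 h
  rwa [Real.exp_add, Real.exp_add, Real.exp_log (hfpos a), Real.exp_log (hfpos b),
    Real.exp_log (hfpos c), Real.exp_log (hfpos d)] at this

lemma shift_Iic (f : ℝ → ℝ) (c x : ℝ) :
    ∫ s in Iic x, f (s + c) = ∫ t in Iic (x + c), f t := by
  have h := (measurePreserving_add_right (volume : Measure ℝ) c).setIntegral_preimage_emb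
    (measurableEmbedding_addRight c) f (Iic (x + c))
  have hpre : (· + c) ⁻¹' (Iic (x + c)) = Iic x := by
    ext s; simp
  rwa [hpre] at h

lemma shift_Ioi (f : ℝ → ℝ) (c x : ℝ) :
    ∫ s in Ioi x, f (s + c) = ∫ t in Ioi (x + c), f t := by
  have h := (measurePreserving_add_right (volume : Measure ℝ) c).setIntegral_preimage_emb
    (measurableEmbedding_addRight c) f (Ioi (x + c))
  have hpre : (· + c) ⁻¹' (Ioi (x + c)) = Ioi x := by
    ext s; simp
  rwa [hpre] at h

/-- For a positive log-concave probability density `f` with CDF `F` and survival function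
`1 - F`, both `F/f` and `-(1-F)/f` are nondecreasing on `ℝ`. -/
theorem logConcave_hazard_monotone
    (f : ℝ → ℝ) (hfmeas : Measurable f) (hfpos : ∀ x, 0 < f x)
    (hflc : ConcaveOn ℝ univ (fun x => Real.log (f x)))
    (hfint : Integrable f) (hfprob : ∫ x, f x = 1)
    (F : ℝ → ℝ) (hF : ∀ x, F x = ∫ y in Iic x, f y) :
    Monotone (fun x => F x / f x) ∧ Monotone (fun x => -(1 - F x) / f x) := by
  have hcomp : ∀ c : ℝ, Integrable (fun s => f (s + c)) := by
    intro c
    exact (measurePreserving_add_right (volume : Measure ℝ) c).integrable_comp_emb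
      (measurableEmbedding_addRight c) |>.2 hfint
  have hsurv : ∀ x, 1 - F x = ∫ t in Ioi x, f t := by
    intro x
    have := intervalIntegral.integral_Iic_add_Ioi (μ := volume) (b := x) hfint.integrableOn hfint.integrableOn
    rw [hfprob] at this
    rw [hF x]; linarith
  constructor
  · intro x y hxy
    simp only
    set c := y - x with hc
    rw [div_le_div_iff₀ (hfpos x) (hfpos y)]
    have key : ∀ s ∈ Iic x, f s * f y ≤ f x * f (s + c) := by
      intro s hs
      exact prod_le hfpos hflc hs hxy (by simp [hc]; ring)
    have hmono : ∫ s in Iic x, f s * f y ≤ ∫ s in Iic x, f x * f (s + c) := by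
      refine setIntegral_mono_on (hfint.mul_const _).integrableOn
        ((hcomp c).const_mul _).integrableOn measurableSet_Iic key
    have h1 : ∫ s in Iic x, f s * f y = F x * f y := by
      rw [hF x, ← integral_mul_const]
    have h2 : ∫ s in Iic x, f x * f (s + c) = f x * F y := by
      rw [integral_const_mul, shift_Iic, hF y]
      congr 2
      simp [hc]
    rw [h1, h2] at hmono
    linarith [hmono]
  · intro x y hxy
    simp only
    set c := y - x with hc
    rw [div_le_div_iff₀ (hfpos x) (hfpos y)]
    have key : ∀ s ∈ Ioi x, f x * f (s + c) ≤ f s * f y := by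
      intro s hs
      simp only [mem_Ioi] at hs
      have := prod_le hfpos hflc (a := x) (b := s + c) (c := y) (d := s)
        hxy (by simp [hc]; linarith) (by ring)
      linarith [this]
    have hmono : ∫ s in Ioi x, f x * f (s + c) ≤ ∫ s in Ioi x, f s * f y := by
      refine setIntegral_mono_on ((hcomp c).const_mul _).integrableOn
        (hfint.mul_const _).integrableOn measurableSet_Ioi key
    have h1 : ∫ s in Ioi x, f s * f y = (1 - F x) * f y := by
      rw [hsurv x, ← integral_mul_const]
    have h2 : ∫ s in Ioi x, f x * f (s + c) = f x * (1 - F y) := by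
      rw [integral_const_mul, shift_Ioi, hsurv y]
      congr 2
      simp [hc]
    rw [h1, h2] at hmono
    nlinarith [hmono]
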